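/- Let $N_0 = 0$ and define recursively $N_{i+1} - N_i = E(u)\,\mathrm{Ad}_G(C)(\varphi(N_i - N_{i-1}))$ with $N_1$ given, and set $\mathcal{A}_C(X) = E(u)^h \mathrm{Ad}_G(C)(\varphi(X))$, $L_1 = \frac{E(u)^h}{u\lambda} N_1$, $z_0 = -\frac{u\varphi(\lambda)}{p}$, $z_i = -\frac{u^{p^i}\varphi^{i+1}(\lambda)}{p\prod_{j=1}^i \varphi^j(E(u))^{h-1}}$. Then for all $i \ge 0$, $E(u)^{h-1}(N_{i+1} - N_i) = z_i\, \mathcal{A}_C^i(L_1)$, and consequently $E(u)^{h-1} N_\infty = \sum_{i \ge 0} z_i\,\mathcal{A}_C^i(L_1)$ where $N_\infty = \lim N_i$. -/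

import Mathlib

/-- telescoping the monodromy series: with `N₀ = 0`,
`N_{i+1} - N_i = E(u)·Ad_G(C)(φ(N_i - N_{i-1}))`, `𝒜_C(X) = E(u)^h Ad_G(C)(φ(X))`,
`L₁ = (E(u)^h/(uλ))·N₁`, and the scalars `z_i` satisfying
`p·z₀ = -(u·φ(λ))` and `z_{i+1}·φ(E)^{h-1} = φ(z_i)` (which hold for
`z_i = -u^{p^i} φ^{i+1}(λ)/(p ∏_{j=1}^i φ^j(E)^{h-1})`), one has
`E^{h-1}(N_{i+1} - N_i) = z_i 𝒜_C^i(L₁)` for all `i`, and consequently the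
partial sums `∑_{i<n} z_i 𝒜_C^i(L₁) = E^{h-1} N_n` converge to `E^{h-1} N_∞`
whenever `N_i → N_∞`. -/
theorem stmt12 {R : Type*} [CommRing R] {M : Type*} [AddCommGroup M] [Module R M]
    [TopologicalSpace M] [IsTopologicalAddGroup M] [ContinuousConstSMul R M]
    (φR : R →+* R) (φM : M → M)
    (hφadd : ∀ x y, φM (x + y) = φM x + φM y)
    (hφsmul : ∀ (r : R) (x : M), φM (r • x) = φR r • φM x)
    (Ad : M →ₗ[R] M)                                 -- Ad_G(C)
    (E pe uu lam : R) (h : ℕ) (hh : 1 ≤ h)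
    [Invertible pe] [Invertible E]
    (hlam : pe * lam = -(E * φR lam))                -- -pλ = E·φ(λ)
    (N : ℕ → M) (hN0 : N 0 = 0)
    (hrec : ∀ i, N (i + 2) - N (i + 1) = E • Ad (φM (N (i + 1) - N i)))
    (L1 : M) (hL1 : (uu * lam) • L1 = E ^ h • N 1)   -- L₁ = (E^h/(uλ))·N₁
    (z : ℕ → R)
    (hz0 : pe * z 0 = -(uu * φR lam))
    (hzrec : ∀ i, z (i + 1) * (φR E) ^ (h - 1) = φR (z i))
    (AC : M → M) (hAC : ∀ X, AC X = E ^ h • Ad (φM X)) :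
    (∀ i, E ^ (h - 1) • (N (i + 1) - N i) = z i • (AC^[i] L1)) ∧
    ∀ Ninf : M, Filter.Tendsto N Filter.atTop (nhds Ninf) →
      Filter.Tendsto (fun n => ∑ i ∈ Finset.range n, z i • (AC^[i] L1))
        Filter.atTop (nhds (E ^ (h - 1) • Ninf)) := by
  have hφE : Invertible (φR E) :=
    ⟨φR ⅟E, by rw [← map_mul, invOf_mul_self, map_one],
      by rw [← map_mul, mul_invOf_self, map_one]⟩
  have hh' : h - 1 + 1 = h := Nat.succ_pred_eq_of_pos hh
  have key : ∀ i, E ^ (h - 1) • (N (i + 1) - N i) = z i • (AC^[i] L1) := by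
    intro i
    induction i with
    | zero =>
      simp only [Function.iterate_zero, id]
      rw [hN0, sub_zero]
      have h1 : pe * (z 0 * E) = pe * (uu * lam) := by
        linear_combination E * hz0 - uu * hlam
      have h2 : z 0 * E = uu * lam := by
        rw [← invOf_mul_cancel_left pe (z 0 * E), h1, invOf_mul_cancel_left]
      have hE : E ^ h = E ^ (h - 1) * E := by rw [← pow_succ, hh']
      have h3 : E • (E ^ (h - 1) • N 1) = E • (z 0 • L1) := by
        rw [smul_smul, smul_smul, mul_comm E (z 0), h2, hL1]
        congr 1
        rw [hE]
        ring
      calc E ^ (h - 1) • N 1 = ⅟E • (E • (E ^ (h - 1) • N 1)) :=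
            (invOf_smul_smul E _).symm
        _ = ⅟E • (E • (z 0 • L1)) := by rw [h3]
        _ = z 0 • L1 := invOf_smul_smul E _
    | succ i ih =>
      have step : (φR E) ^ (h - 1) • φM (N (i + 1) - N i)
          = φR (z i) • φM (AC^[i] L1) := by
        have := congrArg φM ih
        rw [hφsmul, hφsmul, map_pow] at this
        exact this
      have step2 : (φR E) ^ (h - 1) • Ad (φM (N (i + 1) - N i))
          = (φR E) ^ (h - 1) • (z (i + 1) • Ad (φM (AC^[i] L1))) := by
        rw [← map_smul, step, map_smul, ← hzrec i, smul_smul]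
        congr 1
        ring
      have hinv : Invertible ((φR E) ^ (h - 1)) := invertiblePow _ _
      have step3 : Ad (φM (N (i + 1) - N i)) = z (i + 1) • Ad (φM (AC^[i] L1)) := by
        calc Ad (φM (N (i + 1) - N i))
            = ⅟((φR E) ^ (h - 1)) • ((φR E) ^ (h - 1) • Ad (φM (N (i + 1) - N i))) :=
              (invOf_smul_smul _ _).symm
          _ = ⅟((φR E) ^ (h - 1)) • ((φR E) ^ (h - 1) • (z (i + 1) • Ad (φM (AC^[i] L1)))) := by
              rw [step2]
          _ = z (i + 1) • Ad (φM (AC^[i] L1)) := invOf_smul_smul _ _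
      have hE : E ^ h = E ^ (h - 1) * E := by rw [← pow_succ, hh']
      rw [hrec i, step3, Function.iterate_succ_apply', hAC, hE]
      module
  refine ⟨key, fun Ninf hN => ?_⟩
  have hsum : ∀ n, ∑ i ∈ Finset.range n, z i • (AC^[i] L1) = E ^ (h - 1) • N n := by
    intro n
    induction n with
    | zero => simp [hN0]
    | succ n ihn =>
      rw [Finset.sum_range_succ, ihn, ← key n, ← smul_add]
      congr 1
      abel
  have : Filter.Tendsto (fun n => E ^ (h - 1) • N n) Filter.atTop
      (nhds (E ^ (h - 1) • Ninf)) := hN.const_smul _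
  exact this.congr fun n => (hsum n).symm
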